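/- Let K be a field, let q ∈ K be nonzero, and let z ∈ K. For all n ≥ 1, Σ_{σ∈𝔖_n} q^{maj(σ)} · Π_{j=1}^{des(σ)} (1 + z·q^{−j}) = Σ_{k=1}^{n} [k]_q! · S_{n,k}(q) · z^{n−k}. -/

import Mathlib

open Finset

/-- One-line notation: `oneline σ i` is the value σ_i ∈ {1,…,n} at position i ∈ {1,…,n}. -/
def oneline {n : ℕ} (σ : Equiv.Perm (Fin n)) (i : ℕ) : ℕ :=
  if h : 1 ≤ i ∧ i ≤ n then (σ ⟨i - 1, by omega⟩ : ℕ) + 1 else 0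

/-- The descent set Des(σ) = {i ∈ {1,…,n−1} : σ_i > σ_{i+1}}. -/
def DesSet {n : ℕ} (σ : Equiv.Perm (Fin n)) : Finset ℕ :=
  (Finset.Icc 1 (n - 1)).filter fun i => oneline σ (i + 1) < oneline σ i

/-- The ascent set Asc(σ) = {i ∈ {1,…,n−1} : σ_i < σ_{i+1}}. -/
def AscSet {n : ℕ} (σ : Equiv.Perm (Fin n)) : Finset ℕ :=
  (Finset.Icc 1 (n - 1)).filter fun i => oneline σ i < oneline σ (i + 1)

/-- maj(σ) = Σ_{i ∈ Des(σ)} i. -/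
def majNum {n : ℕ} (σ : Equiv.Perm (Fin n)) : ℕ := ∑ i ∈ DesSet σ, i

/-- des(σ) = |Des(σ)|. -/
def desNum {n : ℕ} (σ : Equiv.Perm (Fin n)) : ℕ := (DesSet σ).card

/-- inv(σ) = #{(i,j) : 1 ≤ i < j ≤ n, σ_i > σ_j}. -/
def invNum {n : ℕ} (σ : Equiv.Perm (Fin n)) : ℕ :=
  ((Finset.Icc 1 n ×ˢ Finset.Icc 1 n).filter fun p =>
    p.1 < p.2 ∧ oneline σ p.2 < oneline σ p.1).card

/-- coinv(σ) = #{(i,j) : 1 ≤ i < j ≤ n, σ_i < σ_j}. -/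
def coinvNum {n : ℕ} (σ : Equiv.Perm (Fin n)) : ℕ :=
  ((Finset.Icc 1 n ×ˢ Finset.Icc 1 n).filter fun p =>
    p.1 < p.2 ∧ oneline σ p.1 < oneline σ p.2).card

/-- inv^{□,j}(σ) = #{i : 1 ≤ i < j, σ_i > σ_j}, inversions ending at position j. -/
def invEnd {n : ℕ} (σ : Equiv.Perm (Fin n)) (j : ℕ) : ℕ :=
  ((Finset.Icc 1 n).filter fun i => i < j ∧ oneline σ j < oneline σ i).card

/-- inv^{i,□}(σ) = #{j : i < j ≤ n, σ_i > σ_j}, inversions starting at position i. -/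
def invStart {n : ℕ} (σ : Equiv.Perm (Fin n)) (i : ℕ) : ℕ :=
  ((Finset.Icc 1 n).filter fun j => i < j ∧ oneline σ j < oneline σ i).card

/-- [m]_q = 1 + q + ⋯ + q^{m−1}. -/
def qnum {R : Type*} [CommRing R] (q : R) (m : ℕ) : R := ∑ i ∈ Finset.range m, q ^ i

/-- [m]_q! = [1]_q [2]_q ⋯ [m]_q, with [0]_q! = 1. -/
def qfact {R : Type*} [CommRing R] (q : R) (m : ℕ) : R := ∏ i ∈ Finset.range m, qnum q (i + 1)

/-- q-Stirling numbers: S_{0,0}(q)=1, S_{n,k}(q)=0 for k<0 or k>n, and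
S_{n+1,k}(q) = S_{n,k−1}(q) + [k]_q S_{n,k}(q). -/
def qStirling {R : Type*} [CommRing R] (q : R) : ℕ → ℕ → R
  | 0, 0 => 1
  | 0, _ + 1 => 0
  | _ + 1, 0 => 0
  | n + 1, k + 1 => qStirling q n k + qnum q (k + 1) * qStirling q n (k + 1)

/-- The set of star-sets of size k inside a given finite set (e.g. the descent set). -/
def starSets (D : Finset ℕ) (k : ℕ) : Finset (Finset ℕ) :=
  D.powerset.filter fun S => S.card = k

/-- inv((σ,S)) = inv(σ) − Σ_{i∈S} (1 + inv^{□,i}(σ)) for a descent-starred permutation. -/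
def starInv {n : ℕ} (σ : Equiv.Perm (Fin n)) (S : Finset ℕ) : ℕ :=
  invNum σ - ∑ i ∈ S, (1 + invEnd σ i)

/-- maj((σ,S)) = maj(σ) − Σ_{i∈S} |Des(σ) ∩ {i,…,n−1}| for a descent-starred permutation. -/
def starMaj {n : ℕ} (σ : Equiv.Perm (Fin n)) (S : Finset ℕ) : ℕ :=
  majNum σ - ∑ i ∈ S, (DesSet σ ∩ Finset.Icc i (n - 1)).card

/-- Gaussian binomial coefficients: binom_q(m,0)=1, binom_q(m,r)=0 for r>m, and
binom_q(m,r) = binom_q(m−1,r−1) + q^r · binom_q(m−1,r). -/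
def qbinom {R : Type*} [CommRing R] (q : R) : ℕ → ℕ → R
  | _, 0 => 1
  | 0, _ + 1 => 0
  | m + 1, r + 1 => qbinom q m r + q ^ (r + 1) * qbinom q m (r + 1)

/-- A_{n,j}(q) = Σ_{σ ∈ 𝔖_n, des(σ)=j} q^{maj(σ)}. -/
def eulerA {R : Type*} [CommRing R] (q : R) (n j : ℕ) : R :=
  ∑ σ ∈ (Finset.univ : Finset (Equiv.Perm (Fin n))).filter (fun σ => desNum σ = j),
    q ^ majNum σ

/-- [m]_{p,q} = p^{m−1} + p^{m−2} q + ⋯ + p q^{m−2} + q^{m−1}. -/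
def pqnum {R : Type*} [CommRing R] (p q : R) (m : ℕ) : R :=
  ∑ i ∈ Finset.range m, p ^ (m - 1 - i) * q ^ i

/-- [m]_{p,q}! = [1]_{p,q} [2]_{p,q} ⋯ [m]_{p,q}. -/
def pqfact {R : Type*} [CommRing R] (p q : R) (m : ℕ) : R :=
  ∏ i ∈ Finset.range m, pqnum p q (i + 1)

/-- p,q-Stirling numbers: S_{0,0}(p,q)=1, S_{n,k}(p,q)=0 for k<0 or k>n, and
S_{n+1,k}(p,q) = S_{n,k−1}(p,q) + [k]_{p,q} S_{n,k}(p,q). -/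
def pqStirling {R : Type*} [CommRing R] (p q : R) : ℕ → ℕ → R
  | 0, 0 => 1
  | 0, _ + 1 => 0
  | _ + 1, 0 => 0
  | n + 1, k + 1 => pqStirling p q n k + pqnum p q (k + 1) * pqStirling p q n (k + 1)

/-! ### Auxiliary lemmas: q-numbers, q-binomials, q-Stirling numbers -/

section QAlgebra
variable {R : Type*} [CommRing R] (q : R)

lemma qnum_zero : qnum q 0 = 0 := by simp [qnum]

lemma qnum_one : qnum q 1 = 1 := by simp [qnum]

lemma qnum_add (a b : ℕ) : qnum q (a + b) = qnum q a + q ^ a * qnum q b := by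
  simp [qnum, Finset.sum_range_add, Finset.mul_sum, pow_add]

lemma qfact_succ (m : ℕ) : qfact q (m + 1) = qfact q m * qnum q (m + 1) := by
  simp [qfact, Finset.prod_range_succ]

lemma qbinom_zero_right (d : ℕ) : qbinom q d 0 = 1 := by cases d <;> rfl

lemma qbinom_succ_succ (d r : ℕ) :
    qbinom q (d + 1) (r + 1) = qbinom q d r + q ^ (r + 1) * qbinom q d (r + 1) := rfl

lemma qbinom_eq_zero : ∀ {d r : ℕ}, d < r → qbinom q d r = 0 := by
  intro d
  induction d with
  | zero => intro r hr; match r, hr with | r + 1, _ => rfl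
  | succ n ih =>
    intro r hr
    match r, hr with
    | r + 1, hr =>
      rw [qbinom_succ_succ, ih (by omega), ih (by omega)]
      ring

lemma qnum_mul_qbinom : ∀ (d r : ℕ),
    qnum q (r + 1) * qbinom q d (r + 1) = qnum q (d - r) * qbinom q d r := by
  intro d
  induction d with
  | zero =>
    intro r
    rw [qbinom_eq_zero q (by omega)]
    simp [qnum_zero]
  | succ d ih =>
    intro r
    rcases Nat.lt_or_ge d r with hdr | hdr
    · -- r ≥ d + 1 : both sides vanish
      rw [qbinom_eq_zero q (by omega)]
      rcases Nat.lt_or_ge (d+1) r with h2 | h2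
      · rw [qbinom_eq_zero q (by omega)]
        simp
      · have hr : r = d + 1 := by omega
        subst hr
        have : d + 1 - (d + 1) = 0 := by omega
        rw [this, qnum_zero]
        simp
    · -- r ≤ d
      have hLHS : qnum q (r + 1) * qbinom q (d+1) (r+1) = qnum q (d+1) * qbinom q d r := by
        rw [qbinom_succ_succ, mul_add, ← mul_assoc, mul_comm (qnum q (r+1)) (q ^ (r+1)),
          mul_assoc, ih r]
        have hd1 : d + 1 = (r + 1) + (d - r) := by omega
        rw [hd1, qnum_add q (r+1) (d-r)]
        ring
      rw [hLHS]
      have h3 : d + 1 - r = (d - r) + 1 := by omega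
      rcases r with _ | s
      · simp [qbinom_zero_right]
      · -- target : [d+1]·qb(d,s+1) = [d-s]·qb(d+1,s+1)
        have h4 : d + 1 - (s + 1) = d - s := by omega
        rw [h4, qbinom_succ_succ, mul_add, ← ih s]
        have hcomb : qnum q (d+1) = qnum q (s+1) + q ^ (s+1) * qnum q (d - s) := by
          rw [show d + 1 = (s+1) + (d - s) by omega, qnum_add q (s+1) (d-s)]
        rw [hcomb]
        ring

lemma qStirling_eq_zero : ∀ (n k : ℕ), n < k → qStirling q n k = 0 := by
  intro n
  induction n with
  | zero => intro k hk; match k, hk with | k + 1, _ => rfl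
  | succ n ih =>
    intro k hk
    match k, hk with
    | k + 1, hk =>
      show qStirling q n k + qnum q (k+1) * qStirling q n (k+1) = 0
      rw [ih k (by omega), ih (k+1) (by omega)]
      ring

lemma qStirling_self : ∀ n : ℕ, qStirling q n n = 1 := by
  intro n
  induction n with
  | zero => rfl
  | succ n ih =>
    show qStirling q n n + qnum q (n+1) * qStirling q n (n+1) = 1
    rw [ih, qStirling_eq_zero q n (n+1) (by omega)]
    ring

end QAlgebra

/-! ### Slot sums -/

section SlotSums
variable {R : Type*} [CommRing R] (q : R)

/-- Sum over descent slots: the increments `1 + #{descents > p}` sweep `{1,…,d}`. -/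
lemma sum_desc_slots (n : ℕ) (D : Finset ℕ) (hD : D ⊆ Finset.Icc 1 (n-1)) :
    ∑ p ∈ D, q ^ (1 + (D.filter (fun x => p < x)).card) = ∑ t ∈ Finset.Icc 1 D.card, q ^ t := by
  classical
  set d := D.card with hd
  set f : ℕ → ℕ := fun p => 1 + (D.filter (fun x => p < x)).card with hf
  have hanti : ∀ p ∈ D, ∀ p' ∈ D, p < p' → f p' < f p := by
    intro p hp p' hp' hpp'
    have hss : D.filter (fun x => p' < x) ⊂ D.filter (fun x => p < x) := by
      constructor
      · intro x hx
        simp only [Finset.mem_filter] at hx ⊢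
        exact ⟨hx.1, by omega⟩
      · intro hsub
        have h1 : p' ∈ D.filter (fun x => p < x) := by
          simp only [Finset.mem_filter]; exact ⟨hp', hpp'⟩
        have h2 := hsub h1
        simp only [Finset.mem_filter] at h2
        omega
    have := Finset.card_lt_card hss
    simp only [hf]
    omega
  have hinj : ∀ p ∈ D, ∀ p' ∈ D, f p = f p' → p = p' := by
    intro p hp p' hp' hfe
    rcases Nat.lt_trichotomy p p' with h | h | h
    · exact absurd hfe (by have := hanti p hp p' hp' h; omega)
    · exact h
    · exact absurd hfe (by have := hanti p' hp' p hp h; omega)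
  have hmem : ∀ p ∈ D, f p ∈ Finset.Icc 1 d := by
    intro p hp
    have hsub : D.filter (fun x => p < x) ⊆ D.erase p := by
      intro x hx
      simp only [Finset.mem_filter] at hx
      exact Finset.mem_erase.mpr ⟨by omega, hx.1⟩
    have h1 := Finset.card_le_card hsub
    rw [Finset.card_erase_of_mem hp] at h1
    have h2 : 1 ≤ d := by
      have := Finset.card_pos.mpr ⟨p, hp⟩; omega
    simp only [Finset.mem_Icc, hf]
    omega
  have himage : D.image f = Finset.Icc 1 d := by
    apply Finset.eq_of_subset_of_card_le
    · intro x hx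
      rw [Finset.mem_image] at hx
      obtain ⟨p, hp, rfl⟩ := hx
      exact hmem p hp
    · rw [Finset.card_image_of_injOn hinj, Nat.card_Icc]
      omega
  rw [← himage, Finset.sum_image hinj]

/-- Sum over non-descent slots: the increments `p + 1 + #{descents > p}` sweep `{d+1,…,n}`. -/
lemma sum_asc_slots (n : ℕ) (D : Finset ℕ) (hD : D ⊆ Finset.Icc 1 (n-1)) :
    ∑ p ∈ Finset.range n \ D, q ^ (p + 1 + (D.filter (fun x => p < x)).card)
      = ∑ t ∈ Finset.Icc (D.card + 1) n, q ^ t := by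
  classical
  set d := D.card with hd
  set C := Finset.range n \ D with hC
  set g : ℕ → ℕ := fun p => p + 1 + (D.filter (fun x => p < x)).card with hg
  have hDn : D ⊆ Finset.range n := by
    intro x hx
    have := hD hx
    simp only [Finset.mem_Icc] at this
    simp only [Finset.mem_range]
    omega
  have hmono : ∀ p ∈ C, ∀ p' ∈ C, p < p' → g p < g p' := by
    intro p hp p' hp' hpp'
    simp only [hC, Finset.mem_sdiff, Finset.mem_range] at hp hp'
    have hsplit : D.filter (fun x => p < x)
        = (D.filter (fun x => p < x ∧ x ≤ p')) ∪ (D.filter (fun x => p' < x)) := by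
      ext x
      simp only [Finset.mem_union, Finset.mem_filter]
      constructor
      · rintro ⟨hxD, hx⟩
        rcases le_or_gt x p' with h | h
        · exact Or.inl ⟨hxD, hx, h⟩
        · exact Or.inr ⟨hxD, h⟩
      · rintro (⟨hxD, hx, _⟩ | ⟨hxD, hx⟩)
        · exact ⟨hxD, hx⟩
        · exact ⟨hxD, by omega⟩
    have hdisj : Disjoint (D.filter (fun x => p < x ∧ x ≤ p')) (D.filter (fun x => p' < x)) := by
      rw [Finset.disjoint_left]
      intro x hx hx'
      simp only [Finset.mem_filter] at hx hx'
      omega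
    have hcard : (D.filter (fun x => p < x)).card
        = (D.filter (fun x => p < x ∧ x ≤ p')).card + (D.filter (fun x => p' < x)).card := by
      rw [hsplit, Finset.card_union_of_disjoint hdisj]
    have hbound : (D.filter (fun x => p < x ∧ x ≤ p')).card ≤ p' - p - 1 := by
      have hsub : D.filter (fun x => p < x ∧ x ≤ p') ⊆ Finset.Ioo p p' := by
        intro x hx
        simp only [Finset.mem_filter] at hx
        have hxne : x ≠ p' := by rintro rfl; exact hp'.2 hx.1
        simp only [Finset.mem_Ioo]
        omega
      have := Finset.card_le_card hsub
      rw [Nat.card_Ioo] at this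
      omega
    simp only [hg]
    omega
  have hinj : ∀ p ∈ C, ∀ p' ∈ C, g p = g p' → p = p' := by
    intro p hp p' hp' hfe
    rcases Nat.lt_trichotomy p p' with h | h | h
    · exact absurd hfe (by have := hmono p hp p' hp' h; omega)
    · exact h
    · exact absurd hfe (by have := hmono p' hp' p hp h; omega)
  have hmem : ∀ p ∈ C, g p ∈ Finset.Icc (d+1) n := by
    intro p hp
    simp only [hC, Finset.mem_sdiff, Finset.mem_range] at hp
    -- upper bound
    have hub : (D.filter (fun x => p < x)).card ≤ n - 1 - p := by
      have hsub : D.filter (fun x => p < x) ⊆ Finset.Icc (p+1) (n-1) := by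
        intro x hx
        simp only [Finset.mem_filter] at hx
        have := hD hx.1
        simp only [Finset.mem_Icc] at this ⊢
        omega
      have := Finset.card_le_card hsub
      rw [Nat.card_Icc] at this
      omega
    -- lower bound
    have hlb : d ≤ p + (D.filter (fun x => p < x)).card := by
      have hpart := Finset.card_filter_add_card_filter_not (s := D)
        (p := fun x => p < x)
      have hsub : D.filter (fun x => ¬ p < x) ⊆ Finset.Icc 1 p := by
        intro x hx
        simp only [Finset.mem_filter] at hx
        have := hD hx.1
        simp only [Finset.mem_Icc] at this ⊢
        omega
      have h2 := Finset.card_le_card hsub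
      rw [Nat.card_Icc] at h2
      omega
    simp only [Finset.mem_Icc, hg]
    omega
  have hcardC : C.card = n - d := by
    simp only [hC]
    rw [Finset.card_sdiff_of_subset hDn, Finset.card_range]
  have himage : C.image g = Finset.Icc (d+1) n := by
    apply Finset.eq_of_subset_of_card_le
    · intro x hx
      rw [Finset.mem_image] at hx
      obtain ⟨p, hp, rfl⟩ := hx
      exact hmem p hp
    · rw [Finset.card_image_of_injOn hinj, Nat.card_Icc, hcardC]
      omega
  rw [← himage, Finset.sum_image hinj]

end SlotSums

section GeomSums
variable {R : Type*} [CommRing R] (q : R)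

lemma one_add_sum_Icc (d : ℕ) : (1 : R) + ∑ t ∈ Finset.Icc 1 d, q ^ t = qnum q (d + 1) := by
  induction d with
  | zero => simp [qnum]
  | succ d ih =>
    rw [Finset.sum_Icc_succ_top (by omega), ← add_assoc, ih, qnum_add q (d+1) 1, qnum_one]
    ring

lemma sum_Icc_geom_top (d m : ℕ) :
    ∑ t ∈ Finset.Icc (d + 1) m, q ^ t = q ^ (d + 1) * qnum q (m - d) := by
  rw [← Finset.Ico_add_one_right_eq_Icc, Finset.sum_Ico_eq_sum_range]
  have h : m + 1 - (d + 1) = m - d := by omega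
  rw [h, qnum, Finset.mul_sum]
  refine Finset.sum_congr rfl ?_
  intro k _
  rw [pow_add]

end GeomSums

/-! ### The insertion bijection -/

section Insertion

lemma oneline_def {m : ℕ} (σ : Equiv.Perm (Fin m)) (i : ℕ) (h1 : 1 ≤ i) (h2 : i ≤ m) :
    oneline σ i = (σ ⟨i - 1, by omega⟩ : ℕ) + 1 := by
  unfold oneline
  rw [dif_pos ⟨h1, h2⟩]

lemma oneline_le {m : ℕ} (σ : Equiv.Perm (Fin m)) (i : ℕ) : oneline σ i ≤ m := by
  unfold oneline
  split
  · next h => exact Nat.succ_le_of_lt (σ ⟨i - 1, by omega⟩).isLt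
  · exact Nat.zero_le m

lemma mem_DesSet {m : ℕ} (σ : Equiv.Perm (Fin m)) (i : ℕ) :
    i ∈ DesSet σ ↔ (1 ≤ i ∧ i ≤ m - 1) ∧ oneline σ (i + 1) < oneline σ i := by
  simp [DesSet, Finset.mem_filter, Finset.mem_Icc]

lemma DesSet_subset {m : ℕ} (σ : Equiv.Perm (Fin m)) : DesSet σ ⊆ Finset.Icc 1 (m - 1) :=
  Finset.filter_subset _ _

lemma desNum_le {m : ℕ} (σ : Equiv.Perm (Fin m)) : desNum σ ≤ m - 1 := by
  have := Finset.card_le_card (DesSet_subset σ)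
  rwa [Nat.card_Icc, Nat.add_sub_cancel] at this

variable {n : ℕ}

/-- insert the largest letter `n+1` into the one-line notation of `τ` right after position `p`. -/
def insPerm (τ : Equiv.Perm (Fin n)) (p : Fin (n + 1)) : Equiv.Perm (Fin (n + 1)) :=
  ((finSuccEquiv' p).trans (Equiv.optionCongr τ)).trans finSuccEquivLast.symm

lemma insPerm_apply_self (τ : Equiv.Perm (Fin n)) (p : Fin (n + 1)) :
    insPerm τ p p = Fin.last n := by
  simp [insPerm]

lemma insPerm_apply_succAbove (τ : Equiv.Perm (Fin n)) (p : Fin (n + 1)) (j : Fin n) :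
    insPerm τ p (p.succAbove j) = (τ j).castSucc := by
  simp [insPerm]

lemma oneline_ins_lt (τ : Equiv.Perm (Fin n)) (p : Fin (n + 1)) (i : ℕ)
    (h1 : 1 ≤ i) (h2 : i ≤ (p : ℕ)) : oneline (insPerm τ p) i = oneline τ i := by
  have hpn : (p : ℕ) ≤ n := by omega
  have hin : i ≤ n := le_trans h2 hpn
  have hj : i - 1 < n := by omega
  rw [oneline_def _ i h1 (by omega), oneline_def _ i h1 hin]
  have hsA : p.succAbove ⟨i - 1, hj⟩ = (⟨i - 1, by omega⟩ : Fin (n + 1)) := by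
    rw [Fin.succAbove_of_castSucc_lt]
    · rfl
    · rw [Fin.lt_iff_val_lt_val]
      simp only [Fin.coe_castSucc]
      omega
  rw [← hsA, insPerm_apply_succAbove]
  simp

lemma oneline_ins_self (τ : Equiv.Perm (Fin n)) (p : Fin (n + 1)) :
    oneline (insPerm τ p) ((p : ℕ) + 1) = n + 1 := by
  rw [oneline_def _ _ (by omega) (by omega)]
  have : (⟨(p : ℕ) + 1 - 1, by omega⟩ : Fin (n + 1)) = p := by
    apply Fin.ext; simp
  rw [this, insPerm_apply_self]
  simp [Fin.last]

lemma oneline_ins_gt (τ : Equiv.Perm (Fin n)) (p : Fin (n + 1)) (i : ℕ)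
    (h1 : (p : ℕ) + 2 ≤ i) (h2 : i ≤ n + 1) : oneline (insPerm τ p) i = oneline τ (i - 1) := by
  have hn1 : 1 ≤ n := by omega
  have hj : i - 2 < n := by omega
  rw [oneline_def _ i (by omega) h2, oneline_def _ (i - 1) (by omega) (by omega)]
  have hsA : p.succAbove ⟨i - 2, hj⟩ = (⟨i - 1, by omega⟩ : Fin (n + 1)) := by
    rw [Fin.succAbove_of_le_castSucc]
    · apply Fin.ext; simp [Fin.val_succ]; omega
    · rw [Fin.le_iff_val_le_val]
      simp only [Fin.coe_castSucc]
      omega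
  rw [← hsA, insPerm_apply_succAbove]
  have : (⟨i - 1 - 1, by omega⟩ : Fin n) = ⟨i - 2, hj⟩ := by apply Fin.ext; simp; omega
  rw [this]
  simp

lemma DesSet_ins (τ : Equiv.Perm (Fin n)) (p : Fin (n + 1)) :
    DesSet (insPerm τ p) =
      ((DesSet τ).filter (fun x => x < (p : ℕ))) ∪
      (((DesSet τ).filter (fun x => (p : ℕ) < x)).image (· + 1)) ∪
      (if (p : ℕ) + 1 ≤ n then {(p : ℕ) + 1} else ∅) := by
  ext i
  simp only [Finset.mem_union, Finset.mem_filter, Finset.mem_image]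
  rw [mem_DesSet]
  simp only [Nat.add_sub_cancel]
  have hsing : i ∈ (if (p : ℕ) + 1 ≤ n then ({(p : ℕ) + 1} : Finset ℕ) else ∅) ↔
      ((p : ℕ) + 1 ≤ n ∧ i = (p : ℕ) + 1) := by
    split
    · next h => simp [h]
    · next h => simp [h]
  rw [hsing]
  by_cases h0 : 1 ≤ i ∧ i ≤ n
  · -- i in range
    obtain ⟨hi1, hin⟩ := h0
    rcases Nat.lt_or_ge i (p : ℕ) with hiP | hiP
    · -- i < P : descent iff descent of τ at i
      rw [oneline_ins_lt τ p i hi1 (by omega), oneline_ins_lt τ p (i + 1) (by omega) (by omega)]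
      constructor
      · rintro ⟨⟨_, _⟩, hlt⟩
        exact Or.inl (Or.inl ⟨(mem_DesSet τ i).mpr ⟨⟨hi1, by omega⟩, hlt⟩, hiP⟩)
      · rintro ((⟨hmem, _⟩ | ⟨j, ⟨hj, hjP⟩, hji⟩) | ⟨_, hiPP⟩)
        · rw [mem_DesSet] at hmem
          exact ⟨⟨hi1, hin⟩, hmem.2⟩
        · exfalso; omega
        · exfalso; omega
    · rcases Nat.eq_or_lt_of_le hiP with hiP2 | hiP2
      · -- i = P : never a descent
        have hEq : i = (p : ℕ) := hiP2.symm
        constructor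
        · rintro ⟨_, hlt⟩
          exfalso
          have e1 : oneline (insPerm τ p) (i + 1) = n + 1 := by
            rw [hEq]; exact oneline_ins_self τ p
          have e2 : oneline (insPerm τ p) i = oneline τ i := oneline_ins_lt τ p i hi1 (by omega)
          have e3 := oneline_le τ i
          rw [e1, e2] at hlt
          omega
        · rintro ((⟨_, hc⟩ | ⟨j, ⟨hj, hjP⟩, hji⟩) | ⟨_, hc⟩) <;> (exfalso; omega)
      · rcases Nat.eq_or_lt_of_le hiP2 with hiP3 | hiP3
        · -- i = P + 1 : always a descent
          have hPn : (p : ℕ) + 1 ≤ n := by omega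
          constructor
          · intro _
            exact Or.inr ⟨hPn, hiP3.symm⟩
          · intro _
            refine ⟨⟨hi1, hin⟩, ?_⟩
            have hEq : i = (p : ℕ) + 1 := hiP3.symm
            rw [hEq, oneline_ins_self τ p,
              show (p : ℕ) + 1 + 1 = (p : ℕ) + 2 by omega,
              oneline_ins_gt τ p ((p : ℕ) + 2) le_rfl (by omega)]
            have := oneline_le τ ((p : ℕ) + 2 - 1)
            omega
        · -- i ≥ P + 2 : descent iff descent of τ at i - 1
          rw [oneline_ins_gt τ p i (by omega) (by omega),
            oneline_ins_gt τ p (i + 1) (by omega) (by omega)]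
          have hi1i : i + 1 - 1 = (i - 1) + 1 := by omega
          rw [hi1i]
          constructor
          · rintro ⟨_, hlt⟩
            refine Or.inl (Or.inr ⟨i - 1, ⟨(mem_DesSet τ (i - 1)).mpr ⟨⟨by omega, by omega⟩, hlt⟩,
              by omega⟩, by omega⟩)
          · rintro ((⟨hmem, hc⟩ | ⟨j, ⟨hj, hjP⟩, hji⟩) | ⟨_, hc⟩)
            · exfalso; rw [mem_DesSet] at hmem; omega
            · have hj' : j = i - 1 := by omega
              subst hj'
              rw [mem_DesSet] at hj
              exact ⟨⟨hi1, hin⟩, hj.2⟩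
            · exfalso; omega
  · -- i out of range : both sides false
    constructor
    · rintro ⟨⟨h1, h2⟩, _⟩
      exact absurd ⟨h1, h2⟩ h0
    · rintro ((⟨hmem, _⟩ | ⟨j, ⟨hj, hjP⟩, hji⟩) | ⟨h1, h2⟩)
      · rw [mem_DesSet] at hmem
        exact absurd ⟨hmem.1.1, by omega⟩ h0
      · rw [mem_DesSet] at hj
        exact absurd ⟨by omega, by omega⟩ h0
      · exact absurd ⟨by omega, by omega⟩ h0

lemma DesSet_ins_last (τ : Equiv.Perm (Fin n)) :
    DesSet (insPerm τ (Fin.last n)) = DesSet τ := by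
  rw [DesSet_ins]
  have hval : ((Fin.last n : Fin (n+1)) : ℕ) = n := rfl
  rw [hval]
  have h1 : (DesSet τ).filter (fun x => x < n) = DesSet τ := by
    apply Finset.filter_true_of_mem
    intro x hx
    rw [mem_DesSet] at hx
    omega
  have h2 : (DesSet τ).filter (fun x => n < x) = ∅ := by
    apply Finset.filter_false_of_mem
    intro x hx
    rw [mem_DesSet] at hx
    omega
  rw [h1, h2, if_neg (by omega)]
  simp

lemma maj_des_ins_mem (τ : Equiv.Perm (Fin n)) (p : Fin (n+1)) (hp : (p : ℕ) ∈ DesSet τ) :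
    majNum (insPerm τ p) = majNum τ + 1 + ((DesSet τ).filter (fun x => (p : ℕ) < x)).card
      ∧ desNum (insPerm τ p) = desNum τ := by
  classical
  have hpb := (mem_DesSet τ (p : ℕ)).mp hp
  set D := DesSet τ with hD
  set A := D.filter (fun x => x < (p : ℕ)) with hA
  set B := D.filter (fun x => (p : ℕ) < x) with hB
  have hPn : (p : ℕ) + 1 ≤ n := by omega
  have hDes : DesSet (insPerm τ p) = A ∪ B.image (· + 1) ∪ {(p : ℕ) + 1} := by
    rw [DesSet_ins, if_pos hPn]
  have hmemA : ∀ x ∈ A, x < (p : ℕ) := by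
    intro x hx; rw [hA, Finset.mem_filter] at hx; exact hx.2
  have hmemB : ∀ x ∈ B.image (· + 1), (p : ℕ) + 2 ≤ x := by
    intro x hx
    rw [Finset.mem_image] at hx
    obtain ⟨j, hj, rfl⟩ := hx
    rw [hB, Finset.mem_filter] at hj
    omega
  have hd1 : Disjoint A (B.image (· + 1)) := by
    rw [Finset.disjoint_left]
    intro x hx hx'
    have := hmemA x hx; have := hmemB x hx'; omega
  have hd2 : Disjoint (A ∪ B.image (· + 1)) ({(p : ℕ) + 1} : Finset ℕ) := by
    rw [Finset.disjoint_right]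
    intro x hx hx'
    rw [Finset.mem_singleton] at hx
    subst hx
    rw [Finset.mem_union] at hx'
    rcases hx' with h | h
    · have := hmemA _ h; omega
    · have := hmemB _ h; omega
  have hinj1 : ∀ x ∈ B, ∀ y ∈ B, x + 1 = y + 1 → x = y := by intro x _ y _ h; omega
  have hsumim : ∑ x ∈ B.image (· + 1), x = (∑ x ∈ B, x) + B.card := by
    rw [Finset.sum_image hinj1, Finset.sum_add_distrib]
    simp
  have hsplitD : D.filter (fun x => ¬ x < (p : ℕ)) = insert (p : ℕ) B := by
    ext x
    simp only [Finset.mem_filter, Finset.mem_insert, hB]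
    constructor
    · rintro ⟨hxD, hx⟩
      rcases Nat.eq_or_lt_of_le (Nat.le_of_not_lt hx) with h | h
      · exact Or.inl h.symm
      · exact Or.inr ⟨hxD, h⟩
    · rintro (rfl | ⟨hxD, hx⟩)
      · exact ⟨hp, by omega⟩
      · exact ⟨hxD, by omega⟩
  have hpB : (p : ℕ) ∉ B := by rw [hB, Finset.mem_filter]; omega
  have hmajτ : majNum τ = (∑ x ∈ A, x) + ((p : ℕ) + ∑ x ∈ B, x) := by
    rw [majNum, ← hD, ← Finset.sum_filter_add_sum_filter_not D (fun x => x < (p : ℕ)),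
      hsplitD, Finset.sum_insert hpB]
  have hcardτ : desNum τ = A.card + (1 + B.card) := by
    rw [desNum, ← hD, ← Finset.card_filter_add_card_filter_not (s := D)
      (p := fun x => x < (p : ℕ)), hsplitD, Finset.card_insert_of_notMem hpB, ← hA]
    omega
  have hmajσ : majNum (insPerm τ p) =
      (∑ x ∈ A, x) + ((∑ x ∈ B, x) + B.card) + ((p : ℕ) + 1) := by
    rw [majNum, hDes, Finset.sum_union hd2, Finset.sum_union hd1, hsumim]
    simp
  have hcardσ : desNum (insPerm τ p) = A.card + B.card + 1 := by
    rw [desNum, hDes, Finset.card_union_of_disjoint hd2, Finset.card_union_of_disjoint hd1,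
      Finset.card_image_of_injOn hinj1]
    simp
  constructor
  · omega
  · omega

lemma maj_des_ins_notmem (τ : Equiv.Perm (Fin n)) (p : Fin (n+1)) (hP : (p : ℕ) < n)
    (hp : (p : ℕ) ∉ DesSet τ) :
    majNum (insPerm τ p) = majNum τ + ((p : ℕ) + 1) + ((DesSet τ).filter (fun x => (p : ℕ) < x)).card
      ∧ desNum (insPerm τ p) = desNum τ + 1 := by
  classical
  set D := DesSet τ with hD
  set A := D.filter (fun x => x < (p : ℕ)) with hA
  set B := D.filter (fun x => (p : ℕ) < x) with hB
  have hPn : (p : ℕ) + 1 ≤ n := by omega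
  have hDes : DesSet (insPerm τ p) = A ∪ B.image (· + 1) ∪ {(p : ℕ) + 1} := by
    rw [DesSet_ins, if_pos hPn]
  have hmemA : ∀ x ∈ A, x < (p : ℕ) := by
    intro x hx; rw [hA, Finset.mem_filter] at hx; exact hx.2
  have hmemB : ∀ x ∈ B.image (· + 1), (p : ℕ) + 2 ≤ x := by
    intro x hx
    rw [Finset.mem_image] at hx
    obtain ⟨j, hj, rfl⟩ := hx
    rw [hB, Finset.mem_filter] at hj
    omega
  have hd1 : Disjoint A (B.image (· + 1)) := by
    rw [Finset.disjoint_left]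
    intro x hx hx'
    have := hmemA x hx; have := hmemB x hx'; omega
  have hd2 : Disjoint (A ∪ B.image (· + 1)) ({(p : ℕ) + 1} : Finset ℕ) := by
    rw [Finset.disjoint_right]
    intro x hx hx'
    rw [Finset.mem_singleton] at hx
    subst hx
    rw [Finset.mem_union] at hx'
    rcases hx' with h | h
    · have := hmemA _ h; omega
    · have := hmemB _ h; omega
  have hinj1 : ∀ x ∈ B, ∀ y ∈ B, x + 1 = y + 1 → x = y := by intro x _ y _ h; omega
  have hsumim : ∑ x ∈ B.image (· + 1), x = (∑ x ∈ B, x) + B.card := by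
    rw [Finset.sum_image hinj1, Finset.sum_add_distrib]
    simp
  have hsplitD : D.filter (fun x => ¬ x < (p : ℕ)) = B := by
    ext x
    simp only [Finset.mem_filter, hB]
    constructor
    · rintro ⟨hxD, hx⟩
      refine ⟨hxD, ?_⟩
      rcases Nat.eq_or_lt_of_le (Nat.le_of_not_lt hx) with h | h
      · exact absurd (h ▸ hxD) hp
      · exact h
    · rintro ⟨hxD, hx⟩
      exact ⟨hxD, by omega⟩
  have hmajτ : majNum τ = (∑ x ∈ A, x) + ∑ x ∈ B, x := by
    rw [majNum, ← hD, ← Finset.sum_filter_add_sum_filter_not D (fun x => x < (p : ℕ)), hsplitD]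
  have hcardτ : desNum τ = A.card + B.card := by
    rw [desNum, ← hD, ← Finset.card_filter_add_card_filter_not (s := D)
      (p := fun x => x < (p : ℕ)), hsplitD, ← hA]
  have hmajσ : majNum (insPerm τ p) =
      (∑ x ∈ A, x) + ((∑ x ∈ B, x) + B.card) + ((p : ℕ) + 1) := by
    rw [majNum, hDes, Finset.sum_union hd2, Finset.sum_union hd1, hsumim]
    simp
  have hcardσ : desNum (insPerm τ p) = A.card + B.card + 1 := by
    rw [desNum, hDes, Finset.card_union_of_disjoint hd2, Finset.card_union_of_disjoint hd1,
      Finset.card_image_of_injOn hinj1]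
    simp
  constructor
  · omega
  · omega

lemma ins_bijective :
    Function.Bijective (fun tp : Equiv.Perm (Fin n) × Fin (n+1) => insPerm tp.1 tp.2) := by
  rw [Fintype.bijective_iff_injective_and_card]
  constructor
  · rintro ⟨τ, p⟩ ⟨τ', p'⟩ h
    simp only at h
    have hp : p = p' := by
      apply (insPerm τ' p').injective
      rw [insPerm_apply_self, ← h]
      exact insPerm_apply_self τ p
    subst hp
    have hτ : τ = τ' := by
      apply Equiv.ext
      intro j
      have h1 := congrArg (fun e => e (p.succAbove j)) h
      simp only [insPerm_apply_succAbove] at h1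
      exact Fin.castSucc_injective n h1
    rw [hτ]
  · rw [Fintype.card_prod, Fintype.card_perm, Fintype.card_perm, Fintype.card_fin,
      Fintype.card_fin, Nat.factorial_succ]
    ring

/-- Master recursion: summing any `q^maj`-weighted statistic of `des` over `S_{n+1}`
in terms of `S_n`. -/
lemma master_recursion {K : Type*} [CommRing K] (q : K) (F : ℕ → K) (n : ℕ) :
    ∑ σ : Equiv.Perm (Fin (n+1)), q ^ majNum σ * F (desNum σ)
      = ∑ τ : Equiv.Perm (Fin n), q ^ majNum τ *
          (qnum q (desNum τ + 1) * F (desNum τ)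
            + q ^ (desNum τ + 1) * qnum q (n - desNum τ) * F (desNum τ + 1)) := by
  classical
  rw [← Fintype.sum_bijective _ (ins_bijective (n := n))
    (fun tp => q ^ majNum (insPerm tp.1 tp.2) * F (desNum (insPerm tp.1 tp.2)))
    (fun σ => q ^ majNum σ * F (desNum σ)) (fun tp => rfl)]
  rw [Fintype.sum_prod_type]
  refine Finset.sum_congr rfl ?_
  intro τ _
  set D := DesSet τ with hD
  set d := desNum τ with hd
  set G : ℕ → K := fun P =>
    if P = n then q ^ majNum τ * F d
    else if P ∈ D then q ^ (majNum τ + 1 + (D.filter (fun x => P < x)).card) * F d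
    else q ^ (majNum τ + (P + 1) + (D.filter (fun x => P < x)).card) * F (d + 1) with hG
  have hGval : ∀ p : Fin (n+1),
      q ^ majNum (insPerm τ p) * F (desNum (insPerm τ p)) = G (p : ℕ) := by
    intro p
    by_cases hn : (p : ℕ) = n
    · have hplast : p = Fin.last n := by apply Fin.ext; exact hn
      have h1 : majNum (insPerm τ (Fin.last n)) = majNum τ := by
        unfold majNum; rw [DesSet_ins_last]
      have h2 : desNum (insPerm τ (Fin.last n)) = desNum τ := by
        unfold desNum; rw [DesSet_ins_last]
      rw [hplast, h1, h2]
      simp only [hG, Fin.val_last]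
      simp
      rfl
    · by_cases hmem : (p : ℕ) ∈ D
      · obtain ⟨hmaj, hdes⟩ := maj_des_ins_mem τ p hmem
        simp only [hG, if_neg hn, if_pos hmem]
        rw [hmaj, hdes]
      · have hPn : (p : ℕ) < n := by
          have := p.isLt; omega
        obtain ⟨hmaj, hdes⟩ := maj_des_ins_notmem τ p hPn hmem
        simp only [hG, if_neg hn, if_neg hmem]
        rw [hmaj, hdes]
  calc ∑ p : Fin (n+1), q ^ majNum (insPerm τ p) * F (desNum (insPerm τ p))
      = ∑ p : Fin (n+1), G (p : ℕ) := by
        refine Finset.sum_congr rfl ?_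
        intro p _
        exact hGval p
    _ = ∑ P ∈ Finset.range (n+1), G P := Fin.sum_univ_eq_sum_range G (n+1)
    _ = (∑ P ∈ Finset.range n, G P) + G n := Finset.sum_range_succ G n
    _ = q ^ majNum τ * (qnum q (d + 1) * F d + q ^ (d + 1) * qnum q (n - d) * F (d + 1)) := by
        have hsub : D ⊆ Finset.range n := by
          intro x hx
          rw [mem_DesSet] at hx
          rw [Finset.mem_range]
          omega
        have hGn : G n = q ^ majNum τ * F d := by
          simp only [hG]
          simp
        rw [← Finset.sum_sdiff hsub]
        have hsdiff : ∑ P ∈ Finset.range n \ D, G P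
            = q ^ majNum τ * F (d + 1) *
                ∑ P ∈ Finset.range n \ D, q ^ (P + 1 + (D.filter (fun x => P < x)).card) := by
          rw [Finset.mul_sum]
          refine Finset.sum_congr rfl ?_
          intro P hP
          rw [Finset.mem_sdiff, Finset.mem_range] at hP
          rw [hG]
          simp only [if_neg (by omega : ¬ P = n), if_neg hP.2]
          rw [add_assoc, pow_add]
          ring
        have hDsum : ∑ P ∈ D, G P
            = q ^ majNum τ * F d * ∑ P ∈ D, q ^ (1 + (D.filter (fun x => P < x)).card) := by
          rw [Finset.mul_sum]
          refine Finset.sum_congr rfl ?_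
          intro P hP
          have hPn : P ≠ n := by
            have := (mem_DesSet τ P).mp hP
            omega
          rw [hG]
          simp only [if_neg hPn, if_pos hP]
          rw [add_assoc, pow_add]
          ring
        rw [hsdiff, hDsum, hGn, sum_desc_slots q n D (DesSet_subset τ),
          sum_asc_slots q n D (DesSet_subset τ), show D.card = d from rfl,
          sum_Icc_geom_top q d n, ← one_add_sum_Icc q d]
        ring

end Insertion

/-- triangular numbers -/
def tri (k : ℕ) : ℕ := ∑ i ∈ Finset.range k, i

lemma tri_succ (k : ℕ) : tri (k + 1) = tri k + k := Finset.sum_range_succ _ _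

lemma tri_zero : tri 0 = 0 := rfl

lemma sum_Icc_id_eq_tri (d : ℕ) : ∑ j ∈ Finset.Icc 1 d, j = tri (d + 1) := by
  induction d with
  | zero => simp [tri]
  | succ d ih =>
    rw [Finset.sum_Icc_succ_top (by omega : (1:ℕ) ≤ d + 1), ih, tri_succ (d+1)]

lemma tri_id (d m : ℕ) (h : m ≤ d) : tri (d - m + 1) + m * d = tri m + tri (d + 1) := by
  induction m with
  | zero => simp [tri_zero]
  | succ m ihm =>
    have ihm' := ihm (by omega)
    have hdm : d - (m + 1) + 1 = d - m := by omega
    rw [hdm, Nat.succ_mul, tri_succ m]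
    rw [show d - m + 1 = (d - m) + 1 from rfl, tri_succ (d - m)] at ihm'
    have hsub : d - m + m = d := by omega
    generalize hP : m * d = P at ihm' ⊢
    generalize tri (d - m) = A at ihm' ⊢
    generalize tri m = B at ihm' ⊢
    generalize tri (d + 1) = C at ihm' ⊢
    omega


/-! ### The key identity -/

section KeyLemma
variable {K : Type*} [CommRing K]

lemma qStirling_succ_succ (q : K) (n k : ℕ) :
    qStirling q (n+1) (k+1) = qStirling q n k + qnum q (k+1) * qStirling q n (k+1) := rfl

lemma qpow_mul_upow (q u : K) (hu : q * u = 1) (a : ℕ) : q ^ a * u ^ a = 1 := by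
  rw [← mul_pow, hu, one_pow]

lemma upow_shift (q u : K) (hu : q * u = 1) (f g : ℕ) :
    u ^ f = q ^ g * u ^ (f + g) := by
  have h := qpow_mul_upow q u hu g
  calc u ^ f = u ^ f * (q ^ g * u ^ g) := by rw [h, mul_one]
    _ = q ^ g * u ^ (f + g) := by rw [pow_add]; ring

lemma coeff_identity (q u : K) (hu : q * u = 1) (n m d : ℕ) (hd : d < n) (hm : m + 1 ≤ n) :
    qnum q (d+1) * (u ^ ((m+1) * d) * qbinom q d (m+1))
      + q ^ (d+1) * qnum q (n-d) * (u ^ ((m+1) * (d+1)) * qbinom q (d+1) (m+1))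
    = qnum q (n-m) * (u ^ ((m+1) * d) * qbinom q d (m+1))
      + qnum q (n-m) * u ^ m * (u ^ (m * d) * qbinom q d m) := by
  rw [qbinom_succ_succ]
  rcases Nat.lt_or_ge d m with hdm | hdm
  · rw [qbinom_eq_zero q hdm, qbinom_eq_zero q (by omega : d < m + 1)]
    simp
  · -- m ≤ d
    have l1 : u ^ ((m+1) * d) = q ^ (m+1) * u ^ ((m+1) * (d+1)) := by
      rw [show (m+1) * (d+1) = (m+1) * d + (m+1) by ring]
      exact upow_shift q u hu _ _
    have l2 : u ^ m * u ^ (m * d) = q ^ (d+1) * u ^ ((m+1) * (d+1)) := by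
      rw [← pow_add, show (m+1) * (d+1) = (m + m * d) + (d+1) by ring]
      exact upow_shift q u hu _ _
    have e2 : qnum q (n+1) = qnum q (d+1) + q ^ (d+1) * qnum q (n-d) := by
      rw [← qnum_add]; congr 1; omega
    have e3 : qnum q (n+1) = qnum q (n-m) + q ^ (n-m) * qnum q (m+1) := by
      rw [← qnum_add]; congr 1; omega
    have e4 : qnum q (m+1) * qbinom q d (m+1) = qnum q (d-m) * qbinom q d m :=
      qnum_mul_qbinom q d m
    have e5 : qnum q (n-m) = qnum q (n-d) + q ^ (n-d) * qnum q (d-m) := by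
      rw [← qnum_add]; congr 1; omega
    have eq1 : q ^ (m+1) * q ^ (n-m) = q ^ (n+1) := by
      rw [← pow_add]; congr 1; omega
    have eq2 : q ^ (d+1) * q ^ (n-d) = q ^ (n+1) := by
      rw [← pow_add]; congr 1; omega
    have hMain : qnum q (d+1) * (q ^ (m+1) * qbinom q d (m+1))
        + q ^ (d+1) * qnum q (n-d) * (qbinom q d m + q ^ (m+1) * qbinom q d (m+1))
        = qnum q (n-m) * (q ^ (m+1) * qbinom q d (m+1))
          + qnum q (n-m) * (q ^ (d+1) * qbinom q d m) := by
      linear_combination (-(q^(m+1) * qbinom q d (m+1))) * e2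
        + (q^(m+1) * qbinom q d (m+1)) * e3
        + (qnum q (m+1) * qbinom q d (m+1)) * eq1
        + (q^(n+1)) * e4
        + (-(q^(d+1) * qbinom q d m)) * e5
        + (-(qnum q (d-m) * qbinom q d m)) * eq2
    calc qnum q (d+1) * (u ^ ((m+1) * d) * qbinom q d (m+1))
          + q ^ (d+1) * qnum q (n-d)
            * (u ^ ((m+1) * (d+1)) * (qbinom q d m + q ^ (m+1) * qbinom q d (m+1)))
        = u ^ ((m+1) * (d+1)) * (qnum q (d+1) * (q ^ (m+1) * qbinom q d (m+1))
            + q ^ (d+1) * qnum q (n-d) * (qbinom q d m + q ^ (m+1) * qbinom q d (m+1))) := by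
          rw [l1]; ring
      _ = u ^ ((m+1) * (d+1)) * (qnum q (n-m) * (q ^ (m+1) * qbinom q d (m+1))
            + qnum q (n-m) * (q ^ (d+1) * qbinom q d m)) := by rw [hMain]
      _ = qnum q (n-m) * (u ^ ((m+1) * d) * qbinom q d (m+1))
            + qnum q (n-m) * u ^ m * (u ^ (m * d) * qbinom q d m) := by
          rw [l1, show qnum q (n-m) * u ^ m * (u ^ (m * d) * qbinom q d m)
              = qnum q (n-m) * ((u ^ m * u ^ (m * d)) * qbinom q d m) by ring, l2]
          ring

lemma DesSet_one (σ : Equiv.Perm (Fin 1)) : DesSet σ = ∅ := by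
  unfold DesSet
  rw [show (1:ℕ) - 1 = 0 from rfl, Finset.Icc_eq_empty (by omega), Finset.filter_empty]

lemma key_lemma (q u : K) (hu : q * u = 1) :
    ∀ n : ℕ, 1 ≤ n → ∀ m : ℕ, m ≤ n →
      ∑ σ : Equiv.Perm (Fin n), q ^ majNum σ * (u ^ (m * desNum σ) * qbinom q (desNum σ) m)
        = u ^ tri m * (qfact q (n - m) * qStirling q n (n - m)) := by
  intro n
  induction n with
  | zero => intro h; exact absurd h (by omega)
  | succ n ih =>
    intro _ m hm
    rcases Nat.eq_zero_or_pos n with rfl | hn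
    · -- base case : permutations of one letter
      have hconst : ∀ σ : Equiv.Perm (Fin 1), majNum σ = 0 ∧ desNum σ = 0 := by
        intro σ
        unfold majNum desNum
        rw [DesSet_one]
        simp
      have hsum : ∑ σ : Equiv.Perm (Fin 1),
          q ^ majNum σ * (u ^ (m * desNum σ) * qbinom q (desNum σ) m)
          = qbinom q 0 m := by
        have : ∀ σ : Equiv.Perm (Fin 1),
            q ^ majNum σ * (u ^ (m * desNum σ) * qbinom q (desNum σ) m) = qbinom q 0 m := by
          intro σ
          obtain ⟨h1, h2⟩ := hconst σ
          rw [h1, h2]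
          simp
        rw [Finset.sum_congr rfl (fun σ _ => this σ), Finset.sum_const, Finset.card_univ,
          Fintype.card_perm, Fintype.card_fin]
        simp
      rw [hsum]
      interval_cases m
      · rw [qbinom_zero_right]
        have hS : qStirling q 1 1 = 1 := qStirling_self q 1
        have hf : qfact q 1 = 1 := by simp [qfact, qnum]
        rw [show (1:ℕ) - 0 = 1 from rfl, hS, hf]
        simp [tri]
      · rw [show qbinom q 0 1 = 0 from rfl, show (1:ℕ) - 1 = 0 from rfl,
          show qStirling q 1 0 = 0 from rfl]
        simp
    · -- inductive step, n ≥ 1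
      rcases Nat.eq_or_lt_of_le hm with hm1 | hm1
      · -- m = n + 1 : both sides vanish
        subst hm1
        have hz : ∀ σ : Equiv.Perm (Fin (n+1)),
            q ^ majNum σ * (u ^ ((n+1) * desNum σ) * qbinom q (desNum σ) (n+1)) = 0 := by
          intro σ
          rw [qbinom_eq_zero q (by have := desNum_le σ; omega)]
          ring
        rw [Finset.sum_eq_zero (fun σ _ => hz σ), Nat.sub_self,
          show qStirling q (n+1) 0 = 0 from rfl]
        ring
      · -- m ≤ n
        have hmn : m ≤ n := by omega
        rw [master_recursion q (fun e => u ^ (m * e) * qbinom q e m) n]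
        rcases Nat.eq_zero_or_pos m with rfl | hmpos
        · -- m = 0
          have hstep : ∀ τ : Equiv.Perm (Fin n), τ ∈ (Finset.univ : Finset (Equiv.Perm (Fin n))) →
              q ^ majNum τ *
                (qnum q (desNum τ + 1) * (u ^ (0 * desNum τ) * qbinom q (desNum τ) 0)
                  + q ^ (desNum τ + 1) * qnum q (n - desNum τ)
                    * (u ^ (0 * (desNum τ + 1)) * qbinom q (desNum τ + 1) 0))
              = qnum q (n+1) * (q ^ majNum τ * (u ^ (0 * desNum τ) * qbinom q (desNum τ) 0)) := by
            intro τ _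
            have hd := desNum_le τ
            have hcomb : qnum q (desNum τ + 1) + q ^ (desNum τ + 1) * qnum q (n - desNum τ)
                = qnum q (n+1) := by
              rw [← qnum_add]; congr 1; omega
            rw [qbinom_zero_right, qbinom_zero_right]
            rw [← hcomb]
            ring
          rw [Finset.sum_congr rfl hstep, ← Finset.mul_sum, ih hn 0 (by omega)]
          rw [Nat.sub_zero, Nat.sub_zero, qStirling_self, qStirling_self]
          rw [show qfact q (n+1) = qfact q n * qnum q (n+1) from qfact_succ q n]
          ring
        · -- m = m' + 1
          obtain ⟨m', rfl⟩ : ∃ m', m = m' + 1 := ⟨m - 1, by omega⟩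
          have hstep : ∀ τ : Equiv.Perm (Fin n), τ ∈ (Finset.univ : Finset (Equiv.Perm (Fin n))) →
              q ^ majNum τ *
                (qnum q (desNum τ + 1) * (u ^ ((m'+1) * desNum τ) * qbinom q (desNum τ) (m'+1))
                  + q ^ (desNum τ + 1) * qnum q (n - desNum τ)
                    * (u ^ ((m'+1) * (desNum τ + 1)) * qbinom q (desNum τ + 1) (m'+1)))
              = qnum q (n - m') *
                  (q ^ majNum τ * (u ^ ((m'+1) * desNum τ) * qbinom q (desNum τ) (m'+1)))
                + qnum q (n - m') * u ^ m' *
                  (q ^ majNum τ * (u ^ (m' * desNum τ) * qbinom q (desNum τ) m')) := by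
            intro τ _
            have hd : desNum τ < n := by have := desNum_le τ; omega
            rw [coeff_identity q u hu n m' (desNum τ) hd (by omega)]
            ring
          rw [Finset.sum_congr rfl hstep, Finset.sum_add_distrib, ← Finset.mul_sum,
            ← Finset.mul_sum, ih hn (m'+1) (by omega), ih hn m' (by omega)]
          -- final bookkeeping
          have hk1 : n + 1 - (m' + 1) = n - m' := by omega
          have hk2 : n - m' = (n - (m' + 1)) + 1 := by omega
          rw [hk1, hk2, qStirling_succ_succ, qfact_succ, tri_succ m', pow_add]
          ring
  
end KeyLemma

/-! ### Product expansion and final assembly -/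

section ProdExpansion
variable {K : Type*} [CommRing K]

lemma prod_expansion (q z : K) (d : ℕ) :
    ∏ j ∈ Finset.Icc 1 d, (q ^ j + z)
      = ∑ m ∈ Finset.range (d + 1), z ^ m * (q ^ tri (d - m + 1) * qbinom q d m) := by
  induction d with
  | zero =>
    rw [Finset.Icc_eq_empty (by omega), Finset.prod_empty, Finset.sum_range_one,
      qbinom_zero_right]
    simp [tri]
  | succ d ih =>
    rw [Finset.prod_Icc_succ_top (by omega : (1:ℕ) ≤ d + 1), ih]
    have expand : (∑ m ∈ Finset.range (d+1), z ^ m * (q ^ tri (d - m + 1) * qbinom q d m))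
          * (q ^ (d+1) + z)
        = (∑ m ∈ Finset.range (d+1), z ^ m * (q ^ (d+1) * (q ^ tri (d - m + 1) * qbinom q d m)))
          + ∑ m ∈ Finset.range (d+1), z ^ (m+1) * (q ^ tri (d - m + 1) * qbinom q d m) := by
      rw [mul_add, Finset.sum_mul, Finset.sum_mul]
      congr 1
      · exact Finset.sum_congr rfl (fun m _ => by ring)
      · exact Finset.sum_congr rfl (fun m _ => by ring)
    rw [expand]
    rw [Finset.sum_range_succ'
      (fun m => z ^ m * (q ^ tri (d + 1 - m + 1) * qbinom q (d+1) m)) (d+1)]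
    have hf0 : z ^ 0 * (q ^ tri (d + 1 - 0 + 1) * qbinom q (d+1) 0) = q ^ tri (d+2) := by
      rw [qbinom_zero_right]
      simp
    rw [hf0]
    have hC : ∀ m ∈ Finset.range (d+1),
        z ^ (m+1) * (q ^ tri (d + 1 - (m+1) + 1) * qbinom q (d+1) (m+1))
        = z ^ (m+1) * (q ^ tri (d - m + 1) * qbinom q d m)
          + z ^ (m+1) * (q ^ tri (d - m + 1) * (q ^ (m+1) * qbinom q d (m+1))) := by
      intro m _
      rw [show d + 1 - (m+1) + 1 = d - m + 1 by omega, qbinom_succ_succ]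
      ring
    rw [Finset.sum_congr rfl hC, Finset.sum_add_distrib]
    have hA : ∑ m ∈ Finset.range (d+1), z ^ m * (q ^ (d+1) * (q ^ tri (d - m + 1) * qbinom q d m))
        = (∑ m ∈ Finset.range d,
            z ^ (m+1) * (q ^ tri (d - m + 1) * (q ^ (m+1) * qbinom q d (m+1))))
          + q ^ tri (d+2) := by
      rw [Finset.sum_range_succ'
        (fun m => z ^ m * (q ^ (d+1) * (q ^ tri (d - m + 1) * qbinom q d m))) d]
      congr 1
      · refine Finset.sum_congr rfl ?_
        intro m hm
        rw [Finset.mem_range] at hm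
        rw [show d - (m+1) + 1 = d - m by omega]
        rw [show z ^ (m+1) * (q ^ (d+1) * (q ^ tri (d - m) * qbinom q d (m+1)))
            = z ^ (m+1) * (q ^ ((d+1) + tri (d - m)) * qbinom q d (m+1)) by rw [pow_add]; ring]
        rw [show z ^ (m+1) * (q ^ tri (d - m + 1) * (q ^ (m+1) * qbinom q d (m+1)))
            = z ^ (m+1) * (q ^ (tri (d - m + 1) + (m+1)) * qbinom q d (m+1)) by rw [pow_add]; ring]
        rw [show tri (d - m + 1) + (m+1) = (d+1) + tri (d - m) by
          rw [tri_succ (d - m)]; omega]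
      · rw [qbinom_zero_right, show tri (d+2) = tri (d+1) + (d+1) from tri_succ (d+1), pow_add]
        simp
        ring
    have hC2 : ∑ m ∈ Finset.range (d+1),
          z ^ (m+1) * (q ^ tri (d - m + 1) * (q ^ (m+1) * qbinom q d (m+1)))
        = ∑ m ∈ Finset.range d,
          z ^ (m+1) * (q ^ tri (d - m + 1) * (q ^ (m+1) * qbinom q d (m+1))) := by
      rw [Finset.sum_range_succ, qbinom_eq_zero q (by omega : d < d + 1)]
      simp
    rw [hA, hC2]
    ring

lemma qu_shuffle (q u : K) (hu : q * u = 1) (a b c e : ℕ) (h : b + e = c + a) :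
    u ^ a * q ^ b = q ^ c * u ^ e := by
  calc u ^ a * q ^ b = u ^ a * q ^ b * (q ^ e * u ^ e) := by
        rw [qpow_mul_upow q u hu e, mul_one]
    _ = u ^ a * q ^ (b + e) * u ^ e := by rw [pow_add]; ring
    _ = u ^ a * q ^ (c + a) * u ^ e := by rw [h]
    _ = q ^ c * (q ^ a * u ^ a) * u ^ e := by rw [pow_add]; ring
    _ = q ^ c * u ^ e := by rw [qpow_mul_upow q u hu a, mul_one]

end ProdExpansion

/-- For a field K, q ≠ 0, z ∈ K and n ≥ 1,
Σ_{σ∈𝔖_n} q^{maj(σ)} Π_{j=1}^{des(σ)} (1 + z q^{−j}) = Σ_{k=1}^n [k]_q! S_{n,k}(q) z^{n−k}. -/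
theorem statement3 {K : Type*} [Field K] (q z : K) (hq : q ≠ 0) (n : ℕ) (hn : 1 ≤ n) :
    ∑ σ : Equiv.Perm (Fin n),
        q ^ majNum σ * ∏ j ∈ Finset.Icc 1 (desNum σ), (1 + z * (q ^ j)⁻¹) =
      ∑ k ∈ Finset.Icc 1 n, qfact q k * qStirling q n k * z ^ (n - k) := by
  classical
  set u : K := q⁻¹ with hudef
  have hu : q * u = 1 := mul_inv_cancel₀ hq
  have hfac1 : ∀ j : ℕ, (1 : K) + z * (q ^ j)⁻¹ = u ^ j * (q ^ j + z) := by
    intro j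
    have h1 : (q ^ j)⁻¹ = u ^ j := by rw [hudef, inv_pow]
    have h2 : u ^ j * q ^ j = 1 := by rw [mul_comm]; exact qpow_mul_upow q u hu j
    rw [h1, mul_add, h2]
    ring
  have hfac : ∀ σ : Equiv.Perm (Fin n),
      q ^ majNum σ * ∏ j ∈ Finset.Icc 1 (desNum σ), (1 + z * (q ^ j)⁻¹)
      = ∑ m ∈ Finset.range n,
          q ^ tri m * (q ^ majNum σ * (u ^ (m * desNum σ) * qbinom q (desNum σ) m)) * z ^ m := by
    intro σ
    set d := desNum σ with hd
    have hdn : d + 1 ≤ n := by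
      have := desNum_le σ
      omega
    calc q ^ majNum σ * ∏ j ∈ Finset.Icc 1 d, (1 + z * (q ^ j)⁻¹)
        = q ^ majNum σ * (u ^ (∑ j ∈ Finset.Icc 1 d, j) * ∏ j ∈ Finset.Icc 1 d, (q ^ j + z)) := by
          rw [Finset.prod_congr rfl (fun j _ => hfac1 j), Finset.prod_mul_distrib,
            Finset.prod_pow_eq_pow_sum]
      _ = q ^ majNum σ * (u ^ tri (d+1)
            * ∑ m ∈ Finset.range (d+1), z ^ m * (q ^ tri (d - m + 1) * qbinom q d m)) := by
          rw [sum_Icc_id_eq_tri, prod_expansion]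
      _ = ∑ m ∈ Finset.range (d+1),
            q ^ majNum σ * (u ^ tri (d+1) * (z ^ m * (q ^ tri (d - m + 1) * qbinom q d m))) := by
          rw [Finset.mul_sum, Finset.mul_sum]
      _ = ∑ m ∈ Finset.range (d+1),
            q ^ tri m * (q ^ majNum σ * (u ^ (m * d) * qbinom q d m)) * z ^ m := by
          refine Finset.sum_congr rfl ?_
          intro m hm
          rw [Finset.mem_range] at hm
          have hsh := qu_shuffle q u hu (tri (d+1)) (tri (d - m + 1)) (tri m) (m * d)
            (tri_id d m (by omega))
          calc q ^ majNum σ * (u ^ tri (d+1) * (z ^ m * (q ^ tri (d - m + 1) * qbinom q d m)))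
              = q ^ majNum σ * ((u ^ tri (d+1) * q ^ tri (d - m + 1)) * qbinom q d m) * z ^ m := by
                ring
            _ = q ^ majNum σ * ((q ^ tri m * u ^ (m * d)) * qbinom q d m) * z ^ m := by rw [hsh]
            _ = q ^ tri m * (q ^ majNum σ * (u ^ (m * d) * qbinom q d m)) * z ^ m := by ring
      _ = ∑ m ∈ Finset.range n,
            q ^ tri m * (q ^ majNum σ * (u ^ (m * d) * qbinom q d m)) * z ^ m := by
          refine Finset.sum_subset (Finset.range_subset_range.mpr hdn) ?_
          intro m _ hm
          rw [Finset.mem_range] at hm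
          rw [qbinom_eq_zero q (by omega : d < m)]
          ring
  rw [Finset.sum_congr rfl (fun σ _ => hfac σ), Finset.sum_comm]
  have hinner : ∀ m ∈ Finset.range n,
      (∑ σ : Equiv.Perm (Fin n),
        q ^ tri m * (q ^ majNum σ * (u ^ (m * desNum σ) * qbinom q (desNum σ) m)) * z ^ m)
      = z ^ m * (qfact q (n - m) * qStirling q n (n - m)) := by
    intro m hm
    rw [Finset.mem_range] at hm
    calc (∑ σ : Equiv.Perm (Fin n),
          q ^ tri m * (q ^ majNum σ * (u ^ (m * desNum σ) * qbinom q (desNum σ) m)) * z ^ m)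
        = q ^ tri m * (∑ σ : Equiv.Perm (Fin n),
            q ^ majNum σ * (u ^ (m * desNum σ) * qbinom q (desNum σ) m)) * z ^ m := by
          rw [Finset.mul_sum, Finset.sum_mul]
      _ = q ^ tri m * (u ^ tri m * (qfact q (n - m) * qStirling q n (n - m))) * z ^ m := by
          rw [key_lemma q u hu n hn m (by omega)]
      _ = (q ^ tri m * u ^ tri m) * (qfact q (n - m) * qStirling q n (n - m)) * z ^ m := by ring
      _ = z ^ m * (qfact q (n - m) * qStirling q n (n - m)) := by
          rw [qpow_mul_upow q u hu (tri m)]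
          ring
  rw [Finset.sum_congr rfl hinner]
  refine Finset.sum_nbij' (fun m => n - m) (fun k => n - k) ?_ ?_ ?_ ?_ ?_
  · intro m hm
    simp only [Finset.mem_range] at hm
    simp only [Finset.mem_Icc]
    omega
  · intro k hk
    simp only [Finset.mem_Icc] at hk
    simp only [Finset.mem_range]
    omega
  · intro m hm
    simp only [Finset.mem_range] at hm
    show n - (n - m) = m
    omega
  · intro k hk
    simp only [Finset.mem_Icc] at hk
    show n - (n - k) = k
    omega
  · intro m hm
    simp only [Finset.mem_range] at hm
    show z ^ m * (qfact q (n - m) * qStirling q n (n - m))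
      = qfact q (n - m) * qStirling q n (n - m) * z ^ (n - (n - m))
    rw [show n - (n - m) = m by omega]
    ring
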